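/- Let m be a positive integer. The number of positive permutations of {1,…,m} equals the number of partitions of the set {1,…,m} into nonempty blocks (the m-th Bell number). That is, there is a one-to-one correspondence between set partitions of {1,…,m} and positive permutations in S_m. -/

import Mathlib

open scoped BigOperators

def orbitSetoid {m : ℕ} (β : Equiv.Perm (Fin m)) : Setoid (Fin m) :=
  ⟨β.SameCycle,
    ⟨fun x => Equiv.Perm.SameCycle.refl β x, fun h => h.symm, fun h h' => h.trans h'⟩⟩

noncomputable def numOrbits {m : ℕ} (β : Equiv.Perm (Fin m)) : ℕ :=
  Nat.card (Quotient (orbitSetoid β))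

def accents {m : ℕ} (α : Equiv.Perm (Fin m)) : ℕ :=
  (Finset.univ.filter fun i : Fin m => i < α i).card

def Positive {m : ℕ} (α : Equiv.Perm (Fin m)) : Prop :=
  accents α = m - numOrbits α

namespace PosPerm

variable {m : ℕ}

/-- The orbit of `x` under `α` as a finset. -/
def orb (α : Equiv.Perm (Fin m)) (x : Fin m) : Finset (Fin m) :=
  Finset.univ.filter fun y => α.SameCycle x y

lemma mem_orb {α : Equiv.Perm (Fin m)} {x y : Fin m} :
    y ∈ orb α x ↔ α.SameCycle x y := by simp [orb]

lemma self_mem_orb (α : Equiv.Perm (Fin m)) (x : Fin m) : x ∈ orb α x :=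
  mem_orb.2 (Equiv.Perm.SameCycle.refl α x)

lemma orb_nonempty (α : Equiv.Perm (Fin m)) (x : Fin m) : (orb α x).Nonempty :=
  ⟨x, self_mem_orb α x⟩

lemma orb_eq_of_mem {α : Equiv.Perm (Fin m)} {x y : Fin m} (h : y ∈ orb α x) :
    orb α y = orb α x := by
  ext z
  simp only [mem_orb] at *
  exact ⟨fun hz => h.trans hz, fun hz => h.symm.trans hz⟩

lemma apply_mem_orb (α : Equiv.Perm (Fin m)) (x : Fin m) : α x ∈ orb α x :=
  mem_orb.2 ⟨1, by simp⟩

lemma symm_apply_mem_orb (α : Equiv.Perm (Fin m)) (x : Fin m) : α.symm x ∈ orb α x :=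
  mem_orb.2 ⟨-1, by simp [Equiv.Perm.inv_def]⟩

/-- The largest element of the orbit of `x`. -/
def maxFn (α : Equiv.Perm (Fin m)) (x : Fin m) : Fin m :=
  (orb α x).max' (orb_nonempty α x)

lemma maxFn_mem (α : Equiv.Perm (Fin m)) (x : Fin m) : maxFn α x ∈ orb α x :=
  Finset.max'_mem _ _

lemma le_maxFn {α : Equiv.Perm (Fin m)} {x y : Fin m} (h : y ∈ orb α x) : y ≤ maxFn α x :=
  Finset.le_max' _ _ h

lemma maxFn_congr {α : Equiv.Perm (Fin m)} {x y : Fin m} (h : y ∈ orb α x) :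
    maxFn α y = maxFn α x := by
  unfold maxFn
  congr 1
  exact orb_eq_of_mem h

lemma maxFn_idem (α : Equiv.Perm (Fin m)) (x : Fin m) :
    maxFn α (maxFn α x) = maxFn α x := maxFn_congr (maxFn_mem α x)

/-- The set of orbit-maxima. -/
def Mset (α : Equiv.Perm (Fin m)) : Finset (Fin m) :=
  Finset.univ.filter fun x => maxFn α x = x

lemma numOrbits_eq (α : Equiv.Perm (Fin m)) : numOrbits α = (Mset α).card := by
  have e : Quotient (orbitSetoid α) ≃ {x // x ∈ Mset α} := by
    refine
      { toFun := Quotient.lift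
          (fun x => (⟨maxFn α x, by simp [Mset, maxFn_idem]⟩ : {x // x ∈ Mset α}))
          (fun a b hab => ?_)
        invFun := fun x => ⟦x.1⟧
        left_inv := ?_
        right_inv := ?_ }
    · have : b ∈ orb α a := mem_orb.2 hab
      apply Subtype.ext
      exact (maxFn_congr this).symm
    · refine Quotient.ind (fun x => ?_)
      refine Quotient.sound ?_
      exact (mem_orb.1 (maxFn_mem α x)).symm
    · rintro ⟨x, hx⟩
      simp only [Mset, Finset.mem_filter] at hx
      simp [hx.2]
  rw [numOrbits, Nat.card_congr e, Nat.card_eq_finsetCard]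


/-- Successor map within a block `B`. -/
def nextFn (B : Finset (Fin m)) (x : Fin m) : Fin m :=
  if h : (B.filter fun w => x < w).Nonempty then (B.filter fun w => x < w).min' h
  else if h2 : B.Nonempty then B.min' h2 else x

/-- Predecessor map within a block `B`. -/
def prevFn (B : Finset (Fin m)) (x : Fin m) : Fin m :=
  if h : (B.filter fun w => w < x).Nonempty then (B.filter fun w => w < x).max' h
  else if h2 : B.Nonempty then B.max' h2 else x

section key

variable {α : Equiv.Perm (Fin m)} {O : Finset (Fin m)}

lemma image_eq (hcl : ∀ x ∈ O, α x ∈ O) : O.image α = O := by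
  apply Finset.eq_of_subset_of_card_le
  · intro y hy
    obtain ⟨x, hx, rfl⟩ := Finset.mem_image.1 hy
    exact hcl x hx
  · rw [Finset.card_image_of_injective _ α.injective]

lemma key1 (hne : O.Nonempty) (hcl : ∀ x ∈ O, α x ∈ O)
    (hinc : ∀ x ∈ O, x ≠ O.max' hne → x < α x) :
    α (O.max' hne) = O.min' hne := by
  have hmin : O.min' hne ∈ O.image α := by rw [image_eq hcl]; exact O.min'_mem hne
  obtain ⟨z, hz, hz2⟩ := Finset.mem_image.1 hmin
  by_cases h : z = O.max' hne
  · rw [← h, hz2]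
  · exact absurd hz2 (by
      have := hinc z hz h
      have := O.min'_le z hz
      omega)

lemma key2 (hne : O.Nonempty) (hcl : ∀ x ∈ O, α x ∈ O)
    (hinc : ∀ x ∈ O, x ≠ O.max' hne → x < α x)
    {y : Fin m} (hy : y ∈ O) (hy' : y ≠ O.min' hne)
    (hL : (O.filter fun w => w < y).Nonempty) :
    α ((O.filter fun w => w < y).max' hL) = y := by
  set L := O.filter fun w => w < y with hLdef
  set p := L.max' hL with hpdef
  have hpL : p ∈ L := L.max'_mem hL
  have hpO : p ∈ O := (Finset.mem_filter.1 hpL).1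
  have hpy : p < y := (Finset.mem_filter.1 hpL).2
  have hptop : ∀ w ∈ L, w ≤ p := fun w hw => L.le_max' w hw
  have hpmax : p ≠ O.max' hne := by
    intro h
    have := O.le_max' y hy
    omega
  have hαp : y ≤ α p := by
    by_contra h
    push_neg at h
    have : α p ∈ L := Finset.mem_filter.2 ⟨hcl p hpO, h⟩
    have := hptop _ this
    have := hinc p hpO hpmax
    omega
  -- q : preimage of y
  have hyim : y ∈ O.image α := by rw [image_eq hcl]; exact hy
  obtain ⟨q, hqO, hqy⟩ := Finset.mem_image.1 hyim
  have hqmax : q ≠ O.max' hne := by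
    intro h
    rw [h, key1 hne hcl hinc] at hqy
    exact hy' hqy.symm
  have hqy' : q < y := hqy ▸ hinc q hqO hqmax
  have hqL : q ∈ L := Finset.mem_filter.2 ⟨hqO, hqy'⟩
  -- the preimage-of-L set
  set A := O.filter (fun z => α z ∈ L) with hAdef
  have himA : A.image α = L := by
    apply Finset.Subset.antisymm
    · intro w hw
      obtain ⟨z, hz, rfl⟩ := Finset.mem_image.1 hw
      exact (Finset.mem_filter.1 hz).2
    · intro w hw
      have hwO : w ∈ O := (Finset.mem_filter.1 hw).1
      have : w ∈ O.image α := by rw [image_eq hcl]; exact hwO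
      obtain ⟨z, hz, rfl⟩ := Finset.mem_image.1 this
      exact Finset.mem_image_of_mem _ (Finset.mem_filter.2 ⟨hz, hw⟩)
  have cardA : A.card = L.card := by
    rw [← himA, Finset.card_image_of_injective _ α.injective]
  have hmaxL : O.max' hne ∉ L := by
    intro h
    have h1 := hptop _ h
    have h2 := O.le_max' p hpO
    have : p = O.max' hne := le_antisymm h2 h1
    exact hpmax this
  have hsub : A ⊆ insert (O.max' hne) (L.erase p) := by
    intro z hz
    have hzO : z ∈ O := (Finset.mem_filter.1 hz).1
    have hzL : α z ∈ L := (Finset.mem_filter.1 hz).2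
    have hzy : α z < y := (Finset.mem_filter.1 hzL).2
    have hznp : z ≠ p := by
      intro h
      rw [h] at hzy
      omega
    by_cases hzm : z = O.max' hne
    · rw [hzm]; exact Finset.mem_insert_self _ _
    · have : z < α z := hinc z hzO hzm
      have : z ∈ L := Finset.mem_filter.2 ⟨hzO, by omega⟩
      exact Finset.mem_insert_of_mem (Finset.mem_erase.2 ⟨hznp, this⟩)
  have hcins : (insert (O.max' hne) (L.erase p)).card = L.card := by
    rw [Finset.card_insert_of_notMem (fun h => hmaxL (Finset.mem_of_mem_erase h)),
      Finset.card_erase_of_mem hpL]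
    have : 1 ≤ L.card := Finset.card_pos.2 hL
    omega
  have hAeq : A = insert (O.max' hne) (L.erase p) := by
    apply Finset.eq_of_subset_of_card_le hsub
    rw [hcins, cardA]
  have hqnA : q ∉ A := by
    intro h
    have : α q ∈ L := (Finset.mem_filter.1 h).2
    rw [hqy] at this
    exact absurd (Finset.mem_filter.1 this).2 (lt_irrefl y)
  have : q = p := by
    by_contra h
    exact hqnA (hAeq ▸ Finset.mem_insert_of_mem (Finset.mem_erase.2 ⟨h, hqL⟩))
  rw [← this, hqy]

lemma apply_eq_nextFn (hne : O.Nonempty) (hcl : ∀ x ∈ O, α x ∈ O)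
    (hinc : ∀ x ∈ O, x ≠ O.max' hne → x < α x)
    {x : Fin m} (hx : x ∈ O) : α x = nextFn O x := by
  by_cases hxm : x = O.max' hne
  · have hempty : ¬(O.filter fun w => x < w).Nonempty := by
      rintro ⟨w, hw⟩
      have h1 := (Finset.mem_filter.1 hw).2
      have h2 := O.le_max' w (Finset.mem_filter.1 hw).1
      rw [← hxm] at h2
      omega
    rw [nextFn, dif_neg hempty, dif_pos hne, hxm, key1 hne hcl hinc]
  · have hfne : (O.filter fun w => x < w).Nonempty := by
      refine ⟨O.max' hne, Finset.mem_filter.2 ⟨O.max'_mem hne, ?_⟩⟩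
      have := O.le_max' x hx
      omega
    set y := (O.filter fun w => x < w).min' hfne with hydef
    have hymem := (O.filter fun w => x < w).min'_mem hfne
    have hyO : y ∈ O := (Finset.mem_filter.1 hymem).1
    have hxy : x < y := (Finset.mem_filter.1 hymem).2
    have hymin : y ≠ O.min' hne := by
      have := O.min'_le x hx
      omega
    have hL : (O.filter fun w => w < y).Nonempty :=
      ⟨x, Finset.mem_filter.2 ⟨hx, hxy⟩⟩
    have hkey := key2 hne hcl hinc hyO hymin hL
    have hpx : (O.filter fun w => w < y).max' hL = x := by
      apply le_antisymm
      · apply Finset.max'_le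
        intro w hw
        have hwO := (Finset.mem_filter.1 hw).1
        have hwy := (Finset.mem_filter.1 hw).2
        by_contra h
        push_neg at h
        have : w ∈ O.filter fun w => x < w := Finset.mem_filter.2 ⟨hwO, h⟩
        have := Finset.min'_le _ w this
        rw [← hydef] at this
        omega
      · exact Finset.le_max' (O.filter fun w => w < y) x (Finset.mem_filter.2 ⟨hx, hxy⟩)
    rw [hpx] at hkey
    rw [nextFn, dif_pos hfne, ← hydef, hkey]

end key


section permOf

open Finpartition

variable (P : Finpartition (Finset.univ : Finset (Fin m)))

lemma part_nonempty (x : Fin m) : (P.part x).Nonempty :=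
  ⟨x, P.mem_part (Finset.mem_univ x)⟩

lemma nextFn_mem {B : Finset (Fin m)} (hB : B.Nonempty) (x : Fin m) : nextFn B x ∈ B := by
  rw [nextFn]
  split_ifs with h
  · exact (Finset.mem_filter.1 ((B.filter fun w => x < w).min'_mem h)).1
  · exact B.min'_mem hB

lemma prevFn_mem {B : Finset (Fin m)} (hB : B.Nonempty) (x : Fin m) : prevFn B x ∈ B := by
  rw [prevFn]
  split_ifs with h
  · exact (Finset.mem_filter.1 ((B.filter fun w => w < x).max'_mem h)).1
  · exact B.max'_mem hB

lemma prevFn_nextFn {B : Finset (Fin m)} (hx : x ∈ B) : prevFn B (nextFn B x) = x := by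
  have hB : B.Nonempty := ⟨x, hx⟩
  by_cases hm : x = B.max' hB
  · have hempty : ¬(B.filter fun w => x < w).Nonempty := by
      rintro ⟨w, hw⟩
      have h1 := (Finset.mem_filter.1 hw).2
      have h2 := B.le_max' w (Finset.mem_filter.1 hw).1
      rw [← hm] at h2; omega
    rw [nextFn, dif_neg hempty, dif_pos hB]
    have hempty2 : ¬(B.filter fun w => w < B.min' hB).Nonempty := by
      rintro ⟨w, hw⟩
      have h1 := (Finset.mem_filter.1 hw).2
      have h2 := B.min'_le w (Finset.mem_filter.1 hw).1
      omega
    rw [prevFn, dif_neg hempty2, dif_pos hB, hm]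
  · have hfne : (B.filter fun w => x < w).Nonempty := by
      refine ⟨B.max' hB, Finset.mem_filter.2 ⟨B.max'_mem hB, ?_⟩⟩
      have := B.le_max' x hx; omega
    rw [nextFn, dif_pos hfne]
    set y := (B.filter fun w => x < w).min' hfne with hydef
    have hymem := (B.filter fun w => x < w).min'_mem hfne
    have hyB : y ∈ B := (Finset.mem_filter.1 hymem).1
    have hxy : x < y := (Finset.mem_filter.1 hymem).2
    have hL : (B.filter fun w => w < y).Nonempty := ⟨x, Finset.mem_filter.2 ⟨hx, hxy⟩⟩
    rw [prevFn, dif_pos hL]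
    apply le_antisymm
    · apply Finset.max'_le
      intro w hw
      have hwB := (Finset.mem_filter.1 hw).1
      have hwy := (Finset.mem_filter.1 hw).2
      by_contra h
      push_neg at h
      have : w ∈ B.filter fun w => x < w := Finset.mem_filter.2 ⟨hwB, h⟩
      have := Finset.min'_le _ w this
      rw [← hydef] at this; omega
    · exact Finset.le_max' (B.filter fun w => w < y) x (Finset.mem_filter.2 ⟨hx, hxy⟩)

lemma nextFn_prevFn {B : Finset (Fin m)} (hx : x ∈ B) : nextFn B (prevFn B x) = x := by
  have hB : B.Nonempty := ⟨x, hx⟩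
  by_cases hm : x = B.min' hB
  · have hempty : ¬(B.filter fun w => w < x).Nonempty := by
      rintro ⟨w, hw⟩
      have h1 := (Finset.mem_filter.1 hw).2
      have h2 := B.min'_le w (Finset.mem_filter.1 hw).1
      rw [← hm] at h2; omega
    rw [prevFn, dif_neg hempty, dif_pos hB]
    have hempty2 : ¬(B.filter fun w => B.max' hB < w).Nonempty := by
      rintro ⟨w, hw⟩
      have h1 := (Finset.mem_filter.1 hw).2
      have h2 := B.le_max' w (Finset.mem_filter.1 hw).1
      omega
    rw [nextFn, dif_neg hempty2, dif_pos hB, hm]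
  · have hfne : (B.filter fun w => w < x).Nonempty := by
      refine ⟨B.min' hB, Finset.mem_filter.2 ⟨B.min'_mem hB, ?_⟩⟩
      have := B.min'_le x hx; omega
    rw [prevFn, dif_pos hfne]
    set z := (B.filter fun w => w < x).max' hfne with hzdef
    have hzmem := (B.filter fun w => w < x).max'_mem hfne
    have hzB : z ∈ B := (Finset.mem_filter.1 hzmem).1
    have hzx : z < x := (Finset.mem_filter.1 hzmem).2
    have hL : (B.filter fun w => z < w).Nonempty := ⟨x, Finset.mem_filter.2 ⟨hx, hzx⟩⟩
    rw [nextFn, dif_pos hL]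
    apply le_antisymm
    · exact Finset.min'_le (B.filter fun w => z < w) x (Finset.mem_filter.2 ⟨hx, hzx⟩)
    · apply Finset.le_min'
      intro w hw
      have hwB := (Finset.mem_filter.1 hw).1
      have hwz := (Finset.mem_filter.1 hw).2
      by_contra h
      push_neg at h
      have : w ∈ B.filter fun w => w < x := Finset.mem_filter.2 ⟨hwB, h⟩
      have := Finset.le_max' _ w this
      rw [← hzdef] at this; omega

/-- The permutation whose cycles are the increasing cycles on the blocks of `P`. -/
def permOf : Equiv.Perm (Fin m) where
  toFun x := nextFn (P.part x) x
  invFun x := prevFn (P.part x) x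
  left_inv x := by
    have hx : x ∈ P.part x := P.mem_part (Finset.mem_univ x)
    have hmem : nextFn (P.part x) x ∈ P.part x := nextFn_mem ⟨x, hx⟩ _
    have : P.part (nextFn (P.part x) x) = P.part x :=
      P.part_eq_of_mem (P.part_mem.2 (Finset.mem_univ x)) hmem
    show prevFn (P.part (nextFn (P.part x) x)) (nextFn (P.part x) x) = x
    rw [this, prevFn_nextFn hx]
  right_inv x := by
    have hx : x ∈ P.part x := P.mem_part (Finset.mem_univ x)
    have hmem : prevFn (P.part x) x ∈ P.part x := prevFn_mem ⟨x, hx⟩ _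
    have : P.part (prevFn (P.part x) x) = P.part x :=
      P.part_eq_of_mem (P.part_mem.2 (Finset.mem_univ x)) hmem
    show nextFn (P.part (prevFn (P.part x) x)) (prevFn (P.part x) x) = x
    rw [this, nextFn_prevFn hx]

lemma permOf_apply (x : Fin m) : permOf P x = nextFn (P.part x) x := rfl

lemma permOf_symm_apply (x : Fin m) : (permOf P).symm x = prevFn (P.part x) x := rfl

lemma permOf_apply_mem_part (x : Fin m) : permOf P x ∈ P.part x :=
  nextFn_mem (part_nonempty P x) x

lemma part_permOf_apply (x : Fin m) : P.part (permOf P x) = P.part x :=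
  P.part_eq_of_mem (P.part_mem.2 (Finset.mem_univ x)) (permOf_apply_mem_part P x)

lemma part_eq_of_sameCycle {x y : Fin m} (h : (permOf P).SameCycle x y) :
    P.part y = P.part x := by
  obtain ⟨i, hi, rfl⟩ := h.exists_pow_eq'
  clear hi h
  induction i generalizing x with
  | zero => simp
  | succ n ih =>
    rw [pow_succ, Equiv.Perm.mul_apply]
    rw [ih, part_permOf_apply]

lemma orb_permOf_subset (x : Fin m) : orb (permOf P) x ⊆ P.part x := by
  intro z hz
  have h := part_eq_of_sameCycle P (mem_orb.1 hz)
  have : z ∈ P.part z := P.mem_part (Finset.mem_univ z)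
  rwa [h] at this

lemma orb_permOf (x : Fin m) : orb (permOf P) x = P.part x := by
  apply Finset.Subset.antisymm (orb_permOf_subset P x)
  set O' := orb (permOf P) x with hO'
  have hO'ne : O'.Nonempty := orb_nonempty _ x
  have hclosed : ∀ z ∈ O', permOf P z ∈ O' := fun z hz =>
    mem_orb.2 ((mem_orb.1 hz).trans (mem_orb.1 (apply_mem_orb (permOf P) z)))
  have hsub : O' ⊆ P.part x := orb_permOf_subset P x
  have hpart_eq : ∀ z ∈ O', P.part z = P.part x := fun z hz =>
    P.part_eq_of_mem (P.part_mem.2 (Finset.mem_univ x)) (hsub hz)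
  have hBne : (P.part x).Nonempty := part_nonempty P x
  set Mx := (P.part x).max' hBne with hMx
  have hMxpart : Mx ∈ P.part x := (P.part x).max'_mem hBne
  -- the max of the part lies in the orbit
  have hmax_mem : Mx ∈ O' := by
    set t := O'.max' hO'ne with ht
    have htO' : t ∈ O' := O'.max'_mem hO'ne
    have htpart : t ∈ P.part x := hsub htO'
    by_cases hEq : t = Mx
    · rwa [← hEq]
    · exfalso
      have hfne : ((P.part x).filter fun w => t < w).Nonempty := by
        refine ⟨Mx, Finset.mem_filter.2 ⟨hMxpart, ?_⟩⟩
        have := (P.part x).le_max' t htpart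
        rw [← hMx] at this
        exact lt_of_le_of_ne this hEq
      have happ : permOf P t = ((P.part x).filter fun w => t < w).min' hfne := by
        rw [permOf_apply, hpart_eq t htO', nextFn, dif_pos hfne]
      have h1 : t < permOf P t := by
        rw [happ]
        exact (Finset.mem_filter.1 (((P.part x).filter fun w => t < w).min'_mem hfne)).2
      have h2 : permOf P t ≤ t := O'.le_max' _ (hclosed t htO')
      omega
  -- the min of the part lies in the orbit
  have hmin_mem : (P.part x).min' hBne ∈ O' := by
    have hempty : ¬((P.part x).filter fun w => Mx < w).Nonempty := by
      rintro ⟨w, hw⟩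
      have h1 := (Finset.mem_filter.1 hw).2
      have h2 := (P.part x).le_max' w (Finset.mem_filter.1 hw).1
      rw [← hMx] at h2
      omega
    have : permOf P Mx = (P.part x).min' hBne := by
      rw [permOf_apply, hpart_eq Mx hmax_mem, nextFn, dif_neg hempty, dif_pos hBne]
    rw [← this]
    exact hclosed Mx hmax_mem
  -- invariant set argument
  by_contra hns
  have hRne : (P.part x \ O').Nonempty := by
    rw [Finset.sdiff_nonempty]
    exact hns
  set z := (P.part x \ O').min' hRne with hz
  have hzmem := (P.part x \ O').min'_mem hRne
  have hzpart : z ∈ P.part x := (Finset.mem_sdiff.1 hzmem).1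
  have hznO' : z ∉ O' := (Finset.mem_sdiff.1 hzmem).2
  have hzmin : z ≠ (P.part x).min' hBne := by
    intro h
    rw [h] at hznO'
    exact hznO' hmin_mem
  have hfne : ((P.part x).filter fun w => w < z).Nonempty := by
    refine ⟨(P.part x).min' hBne, Finset.mem_filter.2 ⟨(P.part x).min'_mem hBne, ?_⟩⟩
    have := (P.part x).min'_le z hzpart
    exact lt_of_le_of_ne this (fun h => hzmin h.symm)
  have hgz : (permOf P).symm z = ((P.part x).filter fun w => w < z).max' hfne := by
    rw [permOf_symm_apply, P.part_eq_of_mem (P.part_mem.2 (Finset.mem_univ x)) hzpart,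
      prevFn, dif_pos hfne]
  have hgzmem := ((P.part x).filter fun w => w < z).max'_mem hfne
  have hgzpart : (permOf P).symm z ∈ P.part x := by
    rw [hgz]; exact (Finset.mem_filter.1 hgzmem).1
  have hgzlt : (permOf P).symm z < z := by
    rw [hgz]; exact (Finset.mem_filter.1 hgzmem).2
  have hgzO' : (permOf P).symm z ∈ O' := by
    by_contra h
    have : (permOf P).symm z ∈ P.part x \ O' := Finset.mem_sdiff.2 ⟨hgzpart, h⟩
    have := (P.part x \ O').min'_le _ this
    rw [← hz] at this
    omega
  have : z ∈ O' := by
    have := hclosed _ hgzO'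
    rwa [Equiv.apply_symm_apply] at this
  exact hznO' this

lemma maxFn_permOf (x : Fin m) :
    maxFn (permOf P) x = (P.part x).max' (part_nonempty P x) := by
  unfold maxFn
  congr 1
  exact orb_permOf P x

lemma card_Mset_permOf : (Mset (permOf P)).card = P.parts.card := by
  refine Finset.card_bij (fun x _ => P.part x) ?_ ?_ ?_
  · intro a _
    exact P.part_mem.2 (Finset.mem_univ a)
  · intro a ha b hb hab
    simp only [Mset, Finset.mem_filter, maxFn_permOf] at ha hb
    rw [← ha.2, ← hb.2]
    congr 1
  · intro t ht
    have htne : t.Nonempty := P.nonempty_of_mem_parts ht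
    refine ⟨t.max' htne, ?_, ?_⟩
    · simp only [Mset, Finset.mem_filter, maxFn_permOf]
      refine ⟨Finset.mem_univ _, ?_⟩
      have hp : P.part (t.max' htne) = t := P.part_eq_of_mem ht (t.max'_mem htne)
      congr 1
    · exact P.part_eq_of_mem ht (t.max'_mem htne)

lemma accent_iff_permOf (x : Fin m) : x < permOf P x ↔ maxFn (permOf P) x ≠ x := by
  have hBne : (P.part x).Nonempty := part_nonempty P x
  have hxpart : x ∈ P.part x := P.mem_part (Finset.mem_univ x)
  rw [maxFn_permOf]
  constructor
  · intro h hEq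
    -- x is max, so permOf x = min ≤ x
    have hempty : ¬((P.part x).filter fun w => x < w).Nonempty := by
      rintro ⟨w, hw⟩
      have h1 := (Finset.mem_filter.1 hw).2
      have h2 := (P.part x).le_max' w (Finset.mem_filter.1 hw).1
      rw [hEq] at h2
      omega
    have : permOf P x = (P.part x).min' hBne := by
      rw [permOf_apply, nextFn, dif_neg hempty, dif_pos hBne]
    rw [this] at h
    have := (P.part x).min'_le x hxpart
    omega
  · intro h
    have hfne : ((P.part x).filter fun w => x < w).Nonempty := by
      refine ⟨(P.part x).max' hBne, Finset.mem_filter.2 ⟨(P.part x).max'_mem hBne, ?_⟩⟩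
      have := (P.part x).le_max' x hxpart
      exact lt_of_le_of_ne this (fun hh => h hh.symm)
    have : permOf P x = ((P.part x).filter fun w => x < w).min' hfne := by
      rw [permOf_apply, nextFn, dif_pos hfne]
    rw [this]
    exact (Finset.mem_filter.1 (((P.part x).filter fun w => x < w).min'_mem hfne)).2

end permOf

/-- If accents are exactly the non-orbit-maxima, accents number `m - #orbits`. -/
lemma accents_eq_of_iff {α : Equiv.Perm (Fin m)}
    (h : ∀ x, x < α x ↔ maxFn α x ≠ x) : accents α = m - (Mset α).card := by
  have h1 : (Finset.univ.filter fun x : Fin m => x < α x)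
      = Finset.univ.filter fun x => ¬(maxFn α x = x) := by
    apply Finset.filter_congr
    intro x _
    exact h x
  have h2 := Finset.card_filter_add_card_filter_not
    (s := (Finset.univ : Finset (Fin m))) (p := fun x => maxFn α x = x)
  rw [Finset.card_univ, Fintype.card_fin] at h2
  rw [accents, h1]
  rw [show Mset α = Finset.univ.filter fun x => maxFn α x = x from rfl] at *
  omega

lemma positive_permOf (P : Finpartition (Finset.univ : Finset (Fin m))) :
    Positive (permOf P) := by
  rw [Positive, numOrbits_eq, accents_eq_of_iff (accent_iff_permOf P)]

lemma accent_iff_of_positive {α : Equiv.Perm (Fin m)} (hpos : Positive α) (x : Fin m) :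
    x < α x ↔ maxFn α x ≠ x := by
  set A := Finset.univ.filter fun x : Fin m => x < α x with hA
  set N := Finset.univ.filter fun x : Fin m => ¬(maxFn α x = x) with hN
  have hsub : A ⊆ N := by
    intro z hz
    simp only [hA, hN, Finset.mem_filter] at *
    refine ⟨Finset.mem_univ z, ?_⟩
    intro hEq
    have := le_maxFn (apply_mem_orb α z)
    omega
  have h2 := Finset.card_filter_add_card_filter_not
    (s := (Finset.univ : Finset (Fin m))) (p := fun x => maxFn α x = x)
  rw [Finset.card_univ, Fintype.card_fin] at h2
  have hMle : (Mset α).card ≤ m := by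
    have := Finset.card_filter_le (Finset.univ : Finset (Fin m)) fun x => maxFn α x = x
    rwa [Finset.card_univ, Fintype.card_fin] at this
  have hcard : N.card ≤ A.card := by
    have hacc : A.card = m - numOrbits α := hpos
    rw [numOrbits_eq] at hacc
    have : (Mset α).card + N.card = m := h2
    omega
  have hAN : A = N := Finset.eq_of_subset_of_card_le hsub hcard
  constructor
  · intro h hEq
    have := le_maxFn (apply_mem_orb α x)
    omega
  · intro h
    have : x ∈ N := by simp [hN, h]
    rw [← hAN] at this
    simpa [hA] using this

/-- For a positive permutation, the permutation is the increasing cycle on each orbit. -/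
lemma positive_apply_eq {α : Equiv.Perm (Fin m)} (hpos : Positive α) (x : Fin m) :
    α x = nextFn (orb α x) x := by
  refine apply_eq_nextFn (orb_nonempty α x) ?_ ?_ (self_mem_orb α x)
  · intro z hz
    rw [← orb_eq_of_mem hz]
    exact apply_mem_orb α z
  · intro z hz hne
    rw [accent_iff_of_positive hpos z]
    intro hEq
    apply hne
    rw [← hEq]
    unfold maxFn
    congr 1
    exact orb_eq_of_mem hz

end PosPerm

namespace PosPerm

variable {m : ℕ}

instance (β : Equiv.Perm (Fin m)) : DecidableRel (orbitSetoid β).r :=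
  fun x y => (inferInstance : Decidable (β.SameCycle x y))

lemma part_ofSetoid_orbit (α : Equiv.Perm (Fin m)) (x : Fin m) :
    (Finpartition.ofSetoid (orbitSetoid α)).part x = orb α x := by
  ext y
  rw [Finpartition.mem_part_ofSetoid_iff_rel, mem_orb]
  exact Iff.rfl

lemma parts_eq_image (P : Finpartition (Finset.univ : Finset (Fin m))) :
    P.parts = Finset.univ.image P.part := by
  ext t
  constructor
  · intro ht
    obtain ⟨x, hx⟩ := P.nonempty_of_mem_parts ht
    exact Finset.mem_image.2 ⟨x, Finset.mem_univ x, P.part_eq_of_mem ht hx⟩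
  · rintro ht
    obtain ⟨x, _, rfl⟩ := Finset.mem_image.1 ht
    exact P.part_mem.2 (Finset.mem_univ x)

lemma permOf_ofSetoid {α : Equiv.Perm (Fin m)} (hpos : Positive α) :
    permOf (Finpartition.ofSetoid (orbitSetoid α)) = α := by
  apply Equiv.ext
  intro x
  rw [permOf_apply, part_ofSetoid_orbit, ← positive_apply_eq hpos]

lemma ofSetoid_permOf (P : Finpartition (Finset.univ : Finset (Fin m))) :
    Finpartition.ofSetoid (orbitSetoid (permOf P)) = P := by
  apply Finpartition.ext
  rw [parts_eq_image, parts_eq_image P]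
  apply Finset.image_congr
  intro x _
  rw [part_ofSetoid_orbit, orb_permOf]

/-- The bijection between positive permutations and finpartitions of `univ`. -/
def posEquiv (m : ℕ) :
    {α : Equiv.Perm (Fin m) // Positive α} ≃
      Finpartition (Finset.univ : Finset (Fin m)) where
  toFun a := Finpartition.ofSetoid (orbitSetoid a.1)
  invFun P := ⟨permOf P, positive_permOf P⟩
  left_inv a := Subtype.ext (permOf_ofSetoid a.2)
  right_inv P := ofSetoid_permOf P

end PosPerm

theorem card_positive_eq_bell (m : ℕ) (hm : 0 < m) :
    Nat.card {α : Equiv.Perm (Fin m) // Positive α}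
        = Nat.card (Finpartition (Finset.univ : Finset (Fin m)))
      ∧ Nonempty
        ({α : Equiv.Perm (Fin m) // Positive α} ≃
          Finpartition (Finset.univ : Finset (Fin m))) :=
  ⟨Nat.card_congr (PosPerm.posEquiv m), ⟨PosPerm.posEquiv m⟩⟩
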